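/- Let m ≥ 1, let 0 ≤ ρ < 1, let Σ be the m×m equicorrelation matrix with parameter ρ, and let 0 < t₀ ≤ t₁ < 1. Then sup over τ ∈ [t₀,t₁] of ‖Σ(τ)^{−1}‖_{ℓ∞} is bounded above by the finite constant (2/((1−t₁)(1−ρ)))·max(2, (t₀+1)/t₀), which depends only on ρ, t₀ and t₁. -/

import Mathlib

set_option maxHeartbeats 2000000 in
/-- For the m×m equicorrelation matrix Σ with parameter 0 ≤ ρ < 1 (m ≥ 1)
and 0 < t₀ ≤ t₁ < 1, the quantity ‖Σ(τ)⁻¹‖_{ℓ∞} is bounded over τ ∈ [t₀,t₁] by the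
finite constant (2/((1−t₁)(1−ρ)))·max(2, (t₀+1)/t₀), depending only on ρ, t₀, t₁. -/
theorem stmt_4 (m : ℕ) (hm : 1 ≤ m) (ρ : ℝ) (hρ0 : 0 ≤ ρ) (hρ1 : ρ < 1)
    (S : Matrix (Fin m) (Fin m) ℝ)
    (hS : ∀ i j, S i j = if i = j then 1 else ρ)
    (t₀ t₁ : ℝ) (h0 : 0 < t₀) (h01 : t₀ ≤ t₁) (h1 : t₁ < 1) :
    ∀ τ ∈ Set.Icc t₀ t₁,
      (⨆ i, ∑ j, |(Matrix.fromBlocks S (τ • S) (τ • S) (τ • S))⁻¹ i j|)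
        ≤ (2 / ((1 - t₁) * (1 - ρ))) * max 2 ((t₀ + 1) / t₀) := by
  intro τ hτ
  obtain ⟨hτ0, hτ1⟩ := hτ
  have hτpos : 0 < τ := lt_of_lt_of_le h0 hτ0
  have hτ1' : τ < 1 := lt_of_le_of_lt hτ1 h1
  have hm1 : (1:ℝ) ≤ (m:ℝ) := by exact_mod_cast hm
  set d : ℝ := 1 + ((m:ℝ) - 1) * ρ with hd
  have hd0 : (0:ℝ) < d := by nlinarith
  have hdne : d ≠ 0 := hd0.ne'
  have hρd : ρ / d ≤ 1 := by rw [div_le_one hd0]; nlinarith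
  have hρd0 : 0 ≤ ρ / d := div_nonneg hρ0 hd0.le
  have h1ρ : (0:ℝ) < 1 - ρ := by linarith
  have h1ρne : (1:ℝ) - ρ ≠ 0 := h1ρ.ne'
  have h1τ : (0:ℝ) < 1 - τ := by linarith
  have h1τne : (1:ℝ) - τ ≠ 0 := h1τ.ne'
  have hτne : τ ≠ 0 := hτpos.ne'
  have h1t₁ : (0:ℝ) < 1 - t₁ := by linarith
  set T : Matrix (Fin m) (Fin m) ℝ :=
    Matrix.of fun i j => (1/(1-ρ)) * ((if i = j then (1:ℝ) else 0) - ρ/d) with hT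
  -- S * T = 1
  have hsumT : ∀ j : Fin m, ∑ k, T k j = 1 / d := by
    intro j
    have hent : ∀ k : Fin m, T k j = (1/(1-ρ)) * ((if k = j then (1:ℝ) else 0) - ρ/d) := by
      intro k; rfl
    simp_rw [hent]
    rw [← Finset.mul_sum, Finset.sum_sub_distrib, Finset.sum_ite_eq', Finset.sum_const]
    simp only [Finset.mem_univ, if_true, Finset.card_univ, Fintype.card_fin, nsmul_eq_mul]
    rw [hd]
    have hdd : (1:ℝ) + ((m:ℝ) - 1) * ρ ≠ 0 := by rw [← hd]; exact hdne
    field_simp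
    have hdd' : (1 - ρ + ρ * (m:ℝ)) ≠ 0 := by intro h; apply hdd; linarith
    linear_combination -(mul_inv_cancel₀ hdd')
  have hST : S * T = 1 := by
    ext i j
    rw [Matrix.mul_apply]
    have key : ∀ k, S i k * T k j = ρ * T k j + (if i = k then (1-ρ) * T k j else 0) := by
      intro k
      rw [hS]
      by_cases h : i = k <;> simp [h] <;> ring
    simp_rw [key]
    rw [Finset.sum_add_distrib, Finset.sum_ite_eq, if_pos (Finset.mem_univ i),
      ← Finset.mul_sum, hsumT]
    have hTij : T i j = (1/(1-ρ)) * ((if i = j then (1:ℝ) else 0) - ρ/d) := rfl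
    rw [hTij, Matrix.one_apply]
    by_cases h : i = j <;> simp [h] <;> field_simp <;> ring
  set a : ℝ := 1/(1-τ) with ha
  set e : ℝ := 1/(τ*(1-τ)) with he
  have ha0 : 0 < a := by rw [ha]; exact one_div_pos.mpr h1τ
  have he0 : 0 < e := by rw [he]; exact one_div_pos.mpr (mul_pos hτpos h1τ)
  set N : Matrix (Fin m ⊕ Fin m) (Fin m ⊕ Fin m) ℝ :=
    Matrix.fromBlocks (a • T) ((-a) • T) ((-a) • T) (e • T) with hN
  have keyA : ∀ x : ℝ, S * (x • T) = x • (1 : Matrix (Fin m) (Fin m) ℝ) := by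
    intro x; rw [Matrix.mul_smul, hST]
  have keyB : ∀ x : ℝ, (τ • S) * (x • T) = (τ*x) • (1 : Matrix (Fin m) (Fin m) ℝ) := by
    intro x; rw [Matrix.smul_mul, Matrix.mul_smul, hST, smul_smul]
  have hMN : (Matrix.fromBlocks S (τ • S) (τ • S) (τ • S)) * N = 1 := by
    rw [hN, Matrix.fromBlocks_multiply, keyA, keyA, keyB, keyB, keyB]
    rw [← add_smul, ← add_smul, ← add_smul, ← add_smul]
    have e1 : a + τ * -a = 1 := by rw [ha]; field_simp; ring
    have e2 : -a + τ * e = 0 := by rw [ha, he]; field_simp; ring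
    have e3 : τ * a + τ * -a = 0 := by ring
    have e4 : τ * -a + τ * e = 1 := by rw [ha, he]; field_simp; ring
    rw [e1, e2, e3, e4, one_smul, zero_smul, Matrix.fromBlocks_one]
  rw [Matrix.inv_eq_right_inv hMN]
  -- row sums of |T|
  have hR : ∀ i : Fin m, ∑ j, |T i j| ≤ 2/(1-ρ) := by
    intro i
    have habs : ∀ j, |T i j| = (1/(1-ρ)) * (ρ/d + if i = j then 1 - 2*(ρ/d) else 0) := by
      intro j
      have hTij : T i j = (1/(1-ρ)) * ((if i = j then (1:ℝ) else 0) - ρ/d) := rfl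
      rw [hTij]
      by_cases h : i = j
      · simp only [h, if_true]
        rw [abs_of_nonneg (mul_nonneg (le_of_lt (one_div_pos.mpr h1ρ)) (by linarith))]
        ring
      · simp only [h, if_false]
        rw [abs_of_nonpos (mul_nonpos_of_nonneg_of_nonpos
          (le_of_lt (one_div_pos.mpr h1ρ)) (by linarith))]
        ring
    simp_rw [habs]
    rw [← Finset.mul_sum, Finset.sum_add_distrib, Finset.sum_const, Finset.sum_ite_eq,
      if_pos (Finset.mem_univ i)]
    simp only [Finset.card_univ, Fintype.card_fin, nsmul_eq_mul]
    have hkey : ((m:ℝ)-2) * (ρ/d) ≤ 1 := by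
      rw [show ((m:ℝ)-2)*(ρ/d) = (((m:ℝ)-2)*ρ)/d by ring, div_le_one hd0]
      nlinarith
    have hsum : (m:ℝ) * (ρ/d) + (1 - 2*(ρ/d)) ≤ 2 := by nlinarith
    have h22 : (2:ℝ)/(1-ρ) = (1/(1-ρ)) * 2 := by ring
    rw [h22]
    exact mul_le_mul_of_nonneg_left hsum (le_of_lt (one_div_pos.mpr h1ρ))
  haveI : Nonempty (Fin m) := ⟨⟨0, hm⟩⟩
  apply ciSup_le
  have hC2 : (0:ℝ) < 2 / ((1 - t₁) * (1 - ρ)) := div_pos two_pos (mul_pos h1t₁ h1ρ)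
  intro i
  cases i with
  | inl i =>
    rw [Fintype.sum_sum_type]
    have e1 : ∀ j : Fin m, |N (Sum.inl i) (Sum.inl j)| = a * |T i j| := by
      intro j
      show |a * T i j| = _
      rw [abs_mul, abs_of_pos ha0]
    have e2 : ∀ j : Fin m, |N (Sum.inl i) (Sum.inr j)| = a * |T i j| := by
      intro j
      show |(-a) * T i j| = _
      rw [abs_mul, abs_neg, abs_of_pos ha0]
    simp_rw [e1, e2]
    rw [← Finset.mul_sum]
    have hRi := hR i
    have hRnn : (0:ℝ) ≤ ∑ j, |T i j| := Finset.sum_nonneg fun _ _ => abs_nonneg _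
    have step1 : a * ∑ j, |T i j| + a * ∑ j, |T i j| ≤ (2*a) * (2/(1-ρ)) := by
      nlinarith [mul_le_mul_of_nonneg_left hRi ha0.le]
    refine step1.trans ?_
    have eq1 : (2*a) * (2/(1-ρ)) = 4/((1-τ)*(1-ρ)) := by
      rw [ha]; field_simp; ring
    have eq2 : (2 / ((1 - t₁) * (1 - ρ))) * 2 = 4/((1-t₁)*(1-ρ)) := by
      field_simp; ring
    have step2 : (4:ℝ)/((1-τ)*(1-ρ)) ≤ 4/((1-t₁)*(1-ρ)) := by
      rw [div_le_div_iff₀ (mul_pos h1τ h1ρ) (mul_pos h1t₁ h1ρ)]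
      nlinarith [mul_le_mul_of_nonneg_right (show 1-t₁ ≤ 1-τ by linarith) h1ρ.le]
    calc (2*a) * (2/(1-ρ)) = 4/((1-τ)*(1-ρ)) := eq1
      _ ≤ 4/((1-t₁)*(1-ρ)) := step2
      _ = (2 / ((1 - t₁) * (1 - ρ))) * 2 := eq2.symm
      _ ≤ (2 / ((1 - t₁) * (1 - ρ))) * max 2 ((t₀ + 1) / t₀) :=
          mul_le_mul_of_nonneg_left (le_max_left _ _) hC2.le
  | inr i =>
    rw [Fintype.sum_sum_type]
    have e1 : ∀ j : Fin m, |N (Sum.inr i) (Sum.inl j)| = a * |T i j| := by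
      intro j
      show |(-a) * T i j| = _
      rw [abs_mul, abs_neg, abs_of_pos ha0]
    have e2 : ∀ j : Fin m, |N (Sum.inr i) (Sum.inr j)| = e * |T i j| := by
      intro j
      show |e * T i j| = _
      rw [abs_mul, abs_of_pos he0]
    simp_rw [e1, e2]
    rw [← Finset.mul_sum, ← Finset.mul_sum]
    have hRi := hR i
    have hRnn : (0:ℝ) ≤ ∑ j, |T i j| := Finset.sum_nonneg fun _ _ => abs_nonneg _
    have step1 : a * ∑ j, |T i j| + e * ∑ j, |T i j| ≤ (a+e) * (2/(1-ρ)) := by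
      nlinarith [mul_le_mul_of_nonneg_left hRi (by positivity : (0:ℝ) ≤ a + e)]
    refine step1.trans ?_
    have eq1 : (a+e) * (2/(1-ρ)) = 2*(1+τ)/(τ*(1-τ)*(1-ρ)) := by
      rw [ha, he]; field_simp; ring
    have eq2 : (2 / ((1 - t₁) * (1 - ρ))) * ((t₀ + 1) / t₀) = 2*(t₀+1)/(t₀*(1-t₁)*(1-ρ)) := by
      field_simp
    have step2 : 2*(1+τ)/(τ*(1-τ)*(1-ρ)) ≤ 2*(t₀+1)/(t₀*(1-t₁)*(1-ρ)) := by
      rw [div_le_div_iff₀ (by positivity) (by positivity)]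
      have hP : (1+τ)*t₀ ≤ (t₀+1)*τ := by nlinarith
      have hQ : ((1+τ)*t₀)*((1-t₁)*(1-ρ)) ≤ ((t₀+1)*τ)*((1-t₁)*(1-ρ)) :=
        mul_le_mul_of_nonneg_right hP (by positivity)
      have hQ2 : ((t₀+1)*τ)*((1-t₁)*(1-ρ)) ≤ ((t₀+1)*τ)*((1-τ)*(1-ρ)) :=
        mul_le_mul_of_nonneg_left
          (mul_le_mul_of_nonneg_right (show 1-t₁ ≤ 1-τ by linarith) h1ρ.le)
          (by positivity)
      nlinarith [hQ, hQ2]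
    calc (a+e) * (2/(1-ρ)) = 2*(1+τ)/(τ*(1-τ)*(1-ρ)) := eq1
      _ ≤ 2*(t₀+1)/(t₀*(1-t₁)*(1-ρ)) := step2
      _ = (2 / ((1 - t₁) * (1 - ρ))) * ((t₀ + 1) / t₀) := eq2.symm
      _ ≤ (2 / ((1 - t₁) * (1 - ρ))) * max 2 ((t₀ + 1) / t₀) :=
          mul_le_mul_of_nonneg_left (le_max_right _ _) hC2.le
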